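/- Let H : ℝ → ℝ be continuous and coercive and F0 : ℝ → ℝ be continuous, non-increasing and semi-coercive. If p ∈ ℝ satisfies (ℜF0)(p) ≠ H(p), then ℜF0 is constant on some open neighbourhood of p. -/

import Mathlib

open Set Filter

attribute [local instance] Classical.propDecidable

noncomputable section

/-- `H` is coercive: `H p → +∞` as `|p| → +∞`. -/
def Coercive (H : ℝ → ℝ) : Prop := Tendsto H (cocompact ℝ) atTop

/-- `F` is semi-coercive: `F p → +∞` as `p → -∞`. -/
def SemiCoercive (F : ℝ → ℝ) : Prop := Tendsto F atBot atTop

/-- Sub-relaxation: `(R̲F)(p) = sup_{q ≥ p} min (F q) (H q)`. -/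
def subR (H F : ℝ → ℝ) (p : ℝ) : ℝ := sSup ((fun q => min (F q) (H q)) '' Ici p)

/-- Super-relaxation: `(R̄F)(p) = inf_{q ≤ p} max (F q) (H q)`. -/
def supR (H F : ℝ → ℝ) (p : ℝ) : ℝ := sInf ((fun q => max (F q) (H q)) '' Iic p)

/-- Relaxation operator: `R̲F` where `F ≥ H`, `R̄F` where `F ≤ H`. -/
def relax (H F : ℝ → ℝ) (p : ℝ) : ℝ := if H p ≤ F p then subR H F p else supR H F p

/-- `p` is a negative characteristic point of `F` relative to `H`. -/
def negChar (H F : ℝ → ℝ) (p : ℝ) : Prop :=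
  H p = F p ∧ ∃ ε > 0, ∀ q ∈ Ioo (p - ε) p, H q < H p

/-- `p` is a positive characteristic point of `F` relative to `H`. -/
def posChar (H F : ℝ → ℝ) (p : ℝ) : Prop :=
  H p = F p ∧ ∃ ε > 0, ∀ q ∈ Ioo p (p + ε), H p < H q

/-- The upper point `p⁺ ∈ ℝ ∪ {+∞}` associated with `p` and `H`. -/
def upperPt (H : ℝ → ℝ) (p : ℝ) : EReal :=
  if ∀ ε > 0, ∃ q, p < q ∧ q < p + ε ∧ H q ≤ H p then (p : EReal)
  else sSup ((fun q : ℝ => (q : EReal)) '' {q : ℝ | p < q ∧ ∀ r ∈ Ioo p q, H p < H r})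

/-- The lower point `p⁻` associated with `p` and `H`. -/
def lowerPt (H : ℝ → ℝ) (p : ℝ) : ℝ :=
  if ∀ ε > 0, ∃ q, p - ε < q ∧ q < p ∧ H p ≤ H q then p
  else sInf {q : ℝ | q < p ∧ ∀ r ∈ Ioo q p, H r < H p}

/-- `p` is a positive limiter point of `F`. -/
def posLimiter (H F : ℝ → ℝ) (p : ℝ) : Prop :=
  (p : EReal) < upperPt H p ∧ F p ≤ H p ∧
    ∀ q : ℝ, H q < H p → F q ≤ H q →
      {r : ℝ | lowerPt H q < r ∧ (r : EReal) < upperPt H q} ∩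
        {r : ℝ | p < r ∧ (r : EReal) < upperPt H p} = ∅

/-- `p` is a negative limiter point of `F`. -/
def negLimiter (H F : ℝ → ℝ) (p : ℝ) : Prop :=
  lowerPt H p < p ∧ H p ≤ F p ∧
    ∀ q : ℝ, H q ≤ F q → H p < H q →
      {r : ℝ | lowerPt H q < r ∧ (r : EReal) < upperPt H q} ∩ Ioo (lowerPt H p) p = ∅

/-- The Godunov flux associated with `H`. -/
def godunov (H : ℝ → ℝ) (q p : ℝ) : ℝ :=
  if p ≤ q then sSup (H '' Icc p q) else sInf (H '' Icc q p)

/-- The lower (set-valued) Godunov semi-flux `G̲(q,p)`, as a subset of the extended reals. -/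
def subG (H : ℝ → ℝ) (q p : ℝ) : Set EReal :=
  if q < p then {⊥}
  else if q = p then Iic ((H p : ℝ) : EReal)
  else {((godunov H q p : ℝ) : EReal)}

/-- The upper (set-valued) Godunov semi-flux `Ḡ(q,p)`, as a subset of the extended reals. -/
def supG (H : ℝ → ℝ) (q p : ℝ) : Set EReal :=
  if q < p then {((godunov H q p : ℝ) : EReal)}
  else if q = p then Ici ((H p : ℝ) : EReal)
  else {⊤}

/-- Local property of `ℜF0`: where it differs from `H`, it is locally constant. -/
theorem relax_locally_constant (H F0 : ℝ → ℝ)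
    (hH : Continuous H) (hHc : Coercive H)
    (hF : Continuous F0) (hFa : Antitone F0) (hFs : SemiCoercive F0)
    (p : ℝ) (hne : relax H F0 p ≠ H p) :
    ∃ ε > 0, ∀ x ∈ Ioo (p - ε) (p + ε), relax H F0 x = relax H F0 p := by
  have hcocompact : Tendsto H atBot atTop ∧ Tendsto H atTop atTop := by
    rw [Coercive, cocompact_eq_atBot_atTop, tendsto_sup] at hHc; exact hHc
  by_cases hc : H p ≤ F0 p
  · -- sub-relaxation case
    set g : ℝ → ℝ := fun q => min (F0 q) (H q) with hg
    have hgc : Continuous g := hF.min hH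
    have hbdd : ∀ x : ℝ, BddAbove (g '' Ici x) := fun x =>
      ⟨F0 x, by rintro _ ⟨q, hq, rfl⟩; exact (min_le_left _ _).trans (hFa hq)⟩
    have hnonempty : ∀ x : ℝ, (g '' Ici x).Nonempty := fun x => ⟨g x, x, self_mem_Ici, rfl⟩
    have hmem : ∀ x q, x ≤ q → g q ≤ subR H F0 x := fun x q hq =>
      le_csSup (hbdd x) ⟨q, hq, rfl⟩
    have hrp : relax H F0 p = subR H F0 p := if_pos hc
    have hne' : subR H F0 p ≠ H p := hrp ▸ hne
    have hgp : g p = H p := min_eq_right hc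
    have hs_gt : H p < subR H F0 p :=
      lt_of_le_of_ne (hgp ▸ hmem p p le_rfl) (Ne.symm hne')
    have hsF : subR H F0 p ≤ F0 p :=
      csSup_le (hnonempty p) (by rintro _ ⟨q, hq, rfl⟩; exact (min_le_left _ _).trans (hFa hq))
    have hHF : H p < F0 p := lt_of_lt_of_le hs_gt hsF
    obtain ⟨M, hM⟩ := eventually_atTop.1 (hcocompact.2.eventually_ge_atTop (F0 p))
    set M' := max M p with hM'
    have hgM' : ∀ q, M' ≤ q → g q ≤ g M' := by
      intro q hq
      have h1 : F0 p ≤ H M' := hM M' (le_max_left _ _)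
      have h2 : F0 M' ≤ F0 p := hFa (le_max_right _ _)
      have hg1 : g M' = F0 M' := min_eq_left (h2.trans h1)
      calc g q ≤ F0 q := min_le_left _ _
        _ ≤ F0 M' := hFa hq
        _ = g M' := hg1.symm
    obtain ⟨q', hq'mem, hq'max⟩ :=
      isCompact_Icc.exists_isMaxOn (nonempty_Icc.2 (le_max_right M p)) hgc.continuousOn
    have hmax : ∀ q, p ≤ q → g q ≤ g q' := by
      intro q hq
      rcases le_or_gt q M' with h | h
      · exact hq'max ⟨hq, h⟩
      · exact (hgM' q h.le).trans (hq'max ⟨le_max_right M p, le_rfl⟩)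
    have hs_eq : subR H F0 p = g q' := le_antisymm
      (csSup_le (hnonempty p) (by rintro _ ⟨q, hq, rfl⟩; exact hmax q hq))
      (hmem p q' hq'mem.1)
    have hq'p : p < q' := by
      rcases lt_or_eq_of_le hq'mem.1 with h | h
      · exact h
      · exfalso; rw [← h] at hs_eq; rw [hs_eq, hgp] at hs_gt; exact lt_irrefl _ hs_gt
    have hU : IsOpen {x | g x < subR H F0 p ∧ H x < F0 x} :=
      (isOpen_lt hgc continuous_const).inter (isOpen_lt hH hF)
    have hpU : p ∈ {x | g x < subR H F0 p ∧ H x < F0 x} := ⟨hgp ▸ hs_gt, hHF⟩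
    obtain ⟨δ, hδ, hball⟩ := Metric.isOpen_iff.1 hU p hpU
    refine ⟨min δ (q' - p), lt_min hδ (sub_pos.2 hq'p), ?_⟩
    intro x hx
    have hε1 : min δ (q' - p) ≤ δ := min_le_left _ _
    have hε2 : min δ (q' - p) ≤ q' - p := min_le_right _ _
    have hxδ : x ∈ Metric.ball p δ := by
      rw [Metric.mem_ball, Real.dist_eq, abs_sub_lt_iff]
      constructor
      · linarith [hx.2]
      · linarith [hx.1]
    have hxU := hball hxδ
    have hrx : relax H F0 x = subR H F0 x := if_pos hxU.2.le
    have hle : subR H F0 x ≤ subR H F0 p := by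
      apply csSup_le (hnonempty x)
      rintro _ ⟨q, hq, rfl⟩
      rcases le_or_gt p q with h | h
      · exact hmem p q h
      · have hqδ : q ∈ Metric.ball p δ := by
          rw [Metric.mem_ball, Real.dist_eq, abs_sub_lt_iff]
          have hxq : p - min δ (q' - p) < q := lt_of_lt_of_le hx.1 hq
          constructor
          · linarith
          · linarith
        exact (hball hqδ).1.le
    have hge : subR H F0 p ≤ subR H F0 x := by
      rw [hs_eq]
      apply hmem x q'
      have : x < p + min δ (q' - p) := hx.2
      linarith
    rw [hrx, hrp, le_antisymm hle hge]
  · -- super-relaxation case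
    have hc' : F0 p < H p := lt_of_not_ge hc
    set h : ℝ → ℝ := fun q => max (F0 q) (H q) with hh
    have hhc : Continuous h := hF.max hH
    have hbdd : ∀ x : ℝ, BddBelow (h '' Iic x) := fun x =>
      ⟨F0 x, by rintro _ ⟨q, hq, rfl⟩; exact (hFa hq).trans (le_max_left _ _)⟩
    have hnonempty : ∀ x : ℝ, (h '' Iic x).Nonempty := fun x => ⟨h x, x, self_mem_Iic, rfl⟩
    have hmem : ∀ x q, q ≤ x → supR H F0 x ≤ h q := fun x q hq =>
      csInf_le (hbdd x) ⟨q, hq, rfl⟩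
    have hrp : relax H F0 p = supR H F0 p := if_neg hc
    have hne' : supR H F0 p ≠ H p := hrp ▸ hne
    have hhp : h p = H p := max_eq_right hc'.le
    have ht_lt : supR H F0 p < H p :=
      lt_of_le_of_ne (hhp ▸ hmem p p le_rfl) hne'
    obtain ⟨M, hM⟩ := eventually_atBot.1 (hcocompact.1.eventually_ge_atTop (H p))
    set M' := min M p with hM'
    have hmin0 : ∀ q, q ≤ M' → h p ≤ h q := by
      intro q hq
      have : H p ≤ H q := hM q (hq.trans (min_le_left _ _))
      rw [hhp]
      exact this.trans (le_max_right _ _)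
    obtain ⟨q', hq'mem, hq'min⟩ :=
      isCompact_Icc.exists_isMinOn (nonempty_Icc.2 (min_le_right M p)) hhc.continuousOn
    have hq'le : h q' ≤ h p := hq'min ⟨min_le_right M p, le_rfl⟩
    have hmin : ∀ q, q ≤ p → h q' ≤ h q := by
      intro q hq
      rcases le_or_gt M' q with hq2 | hq2
      · exact hq'min ⟨hq2, hq⟩
      · exact hq'le.trans (hmin0 q hq2.le)
    have ht_eq : supR H F0 p = h q' := le_antisymm
      (hmem p q' hq'mem.2)
      (le_csInf (hnonempty p) (by rintro _ ⟨q, hq, rfl⟩; exact hmin q hq))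
    have hq'p : q' < p := by
      rcases lt_or_eq_of_le hq'mem.2 with hlt | heq
      · exact hlt
      · exfalso; rw [heq] at ht_eq; rw [ht_eq, hhp] at ht_lt; exact lt_irrefl _ ht_lt
    have hU : IsOpen {x | supR H F0 p < h x ∧ F0 x < H x} :=
      (isOpen_lt continuous_const hhc).inter (isOpen_lt hF hH)
    have hpU : p ∈ {x | supR H F0 p < h x ∧ F0 x < H x} := ⟨hhp ▸ ht_lt, hc'⟩
    obtain ⟨δ, hδ, hball⟩ := Metric.isOpen_iff.1 hU p hpU
    refine ⟨min δ (p - q'), lt_min hδ (sub_pos.2 hq'p), ?_⟩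
    intro x hx
    have hε1 : min δ (p - q') ≤ δ := min_le_left _ _
    have hε2 : min δ (p - q') ≤ p - q' := min_le_right _ _
    have hxδ : x ∈ Metric.ball p δ := by
      rw [Metric.mem_ball, Real.dist_eq, abs_sub_lt_iff]
      constructor
      · linarith [hx.2]
      · linarith [hx.1]
    have hxU := hball hxδ
    have hrx : relax H F0 x = supR H F0 x := if_neg (not_le.2 hxU.2)
    have hle : supR H F0 x ≤ supR H F0 p := by
      rw [ht_eq]
      apply hmem x q'
      have : p - min δ (p - q') < x := hx.1
      linarith
    have hge : supR H F0 p ≤ supR H F0 x := by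
      apply le_csInf (hnonempty x)
      rintro _ ⟨q, hq, rfl⟩
      rcases le_or_gt q p with hqp | hqp
      · exact hmem p q hqp
      · have hqδ : q ∈ Metric.ball p δ := by
          rw [Metric.mem_ball, Real.dist_eq, abs_sub_lt_iff]
          have hxq : q < p + min δ (p - q') := lt_of_le_of_lt hq hx.2
          constructor
          · linarith
          · linarith
        exact (hball hqδ).1.le
    rw [hrx, hrp, le_antisymm hle hge]
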